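/- Fix a > 0, a real p ≥ 1, and δ ∈ [0,1). For t ∈ (0,1), let N_t be a Poisson random variable with mean t^(1−δ)·a, and define the likelihood ratio L_t = e^((t^(1−δ)−t)·a) · t^(δ·N_t). Then, as t → 0⁺, E[N_t^p · L_t^p · 1_{N_t ≥ 1}] = t^((p−1)δ+1) · a · e^(p(t^(1−δ)−t)·a) · e^(−t^(1−δ)·a) · (1 + o(1)); that is, the ratio of the left-hand side to t^((p−1)δ+1) · a · e^(p(t^(1−δ)−t)·a) · e^(−t^(1−δ)·a) tends to 1 as t → 0⁺. -/

import Mathlib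

open Filter Real


lemma nat_rpow_le_aux (p : ℝ) (hp : 0 ≤ p) (k : ℕ) :
    (k : ℝ) ^ p ≤ ((2:ℝ) ^ p) ^ k := by
  have h1 : (k : ℝ) ≤ (2:ℝ) ^ k := by exact_mod_cast (Nat.lt_two_pow_self (n := k)).le
  calc (k:ℝ)^p ≤ ((2:ℝ)^k : ℝ)^p := Real.rpow_le_rpow (by positivity) h1 hp
    _ = ((2:ℝ)^p) ^ k := by
        rw [← Real.rpow_natCast 2 k, ← Real.rpow_natCast ((2:ℝ)^p) k,
          ← Real.rpow_mul (by norm_num), ← Real.rpow_mul (by norm_num), mul_comm]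

lemma summable_g (p : ℝ) (hp : 0 ≤ p) (u : ℝ) (hu : 0 ≤ u) :
    Summable (fun k : ℕ => if 1 ≤ k then (k:ℝ)^p * u^k / (k.factorial : ℝ) else 0) := by
  refine Summable.of_nonneg_of_le (fun k => by positivity) (fun k => ?_)
    (Real.summable_pow_div_factorial ((2:ℝ)^p * u))
  by_cases hk : 1 ≤ k
  · simp only [hk, if_true, mul_pow]
    gcongr
    exact nat_rpow_le_aux p hp k
  · simp only [hk, if_false]
    positivity

lemma F_tendsto (p : ℝ) (hp : 1 ≤ p) :
    Tendsto (fun u : ℝ => (∑' k : ℕ, if 1 ≤ k then (k:ℝ)^p * u^k / (k.factorial:ℝ) else 0) / u)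
      (nhdsWithin 0 (Set.Ioi 0)) (nhds 1) := by
  have hp0 : 0 ≤ p := le_trans zero_le_one hp
  set C := ∑' k : ℕ, ((2:ℝ)^p)^k / (k.factorial:ℝ) with hC
  have hC0 : 0 ≤ C := tsum_nonneg (fun k => by positivity)
  apply tendsto_of_tendsto_of_tendsto_of_le_of_le' (g := fun _ : ℝ => (1:ℝ))
      (h := fun u : ℝ => 1 + C * u)
  · exact tendsto_const_nhds
  · have h1 : Tendsto (fun u : ℝ => 1 + C*u) (nhds 0) (nhds (1 + C*0)) :=
      Continuous.tendsto (by continuity) 0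
    simpa using h1.mono_left nhdsWithin_le_nhds
  · filter_upwards [self_mem_nhdsWithin] with u hu
    have hu : (0:ℝ) < u := hu
    rw [le_div_iff₀ hu, one_mul]
    have h := Summable.le_tsum (summable_g p hp0 u hu.le) 1 (fun j _ => by positivity)
    simpa using h
  · filter_upwards [Ioo_mem_nhdsGT_of_mem (Set.left_mem_Ico.mpr one_pos)] with u hu
    obtain ⟨hu0, hu1⟩ := hu
    rw [div_le_iff₀ hu0]
    have hsb : Summable (fun k : ℕ => (if k = 1 then u else 0) + u^2 * (((2:ℝ)^p)^k / (k.factorial:ℝ))) :=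
      ((hasSum_ite_eq 1 u).summable).add ((Real.summable_pow_div_factorial ((2:ℝ)^p)).mul_left (u^2))
    have hle : ∀ k : ℕ, (if 1 ≤ k then (k:ℝ)^p * u^k / (k.factorial:ℝ) else 0)
        ≤ (if k = 1 then u else 0) + u^2 * (((2:ℝ)^p)^k / (k.factorial:ℝ)) := by
      intro k
      match k with
      | 0 => simp; positivity
      | 1 =>
        simp [Nat.factorial_one]
        positivity
      | (n+2) =>
        have hk1 : 1 ≤ n + 2 := by omega
        have hne : ¬ (n + 2 = 1) := by omega
        simp only [hk1, if_true, hne, if_false, zero_add]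
        have h2 : u^(n+2) ≤ u^2 := pow_le_pow_of_le_one hu0.le hu1.le (by omega)
        calc ((n+2:ℕ):ℝ)^p * u^(n+2) / (((n+2:ℕ)).factorial:ℝ)
            ≤ ((2:ℝ)^p)^(n+2) * u^2 / (((n+2:ℕ)).factorial:ℝ) := by
              gcongr <;> first
                | exact nat_rpow_le_aux p hp0 (n+2)
                | exact h2
          _ = u^2 * (((2:ℝ)^p)^(n+2)/(((n+2:ℕ)).factorial:ℝ)) := by ring
    have := Summable.tsum_le_tsum hle (summable_g p hp0 u hu0.le) hsb
    calc (∑' k : ℕ, if 1 ≤ k then (k:ℝ)^p * u^k / (k.factorial:ℝ) else 0)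
        ≤ ∑' k : ℕ, ((if k = 1 then u else 0) + u^2 * (((2:ℝ)^p)^k / (k.factorial:ℝ))) := this
      _ = u + u^2 * C := by
          rw [Summable.tsum_add ((hasSum_ite_eq 1 u).summable)
            ((Real.summable_pow_div_factorial ((2:ℝ)^p)).mul_left (u^2)), tsum_ite_eq, tsum_mul_left]
      _ ≤ (1 + C * u) * u := by nlinarith


/-- Single-step Poisson importance sampling computation at the heart of
Lemma 5.1: for `N_t ~ Poisson(t^(1-δ)·a)` and likelihood ratio
`L_t = e^((t^(1-δ)-t)·a) · t^(δ·N_t)`, the moment `E[N_t^p L_t^p 1_{N_t ≥ 1}]`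
(written as the sum over the Poisson distribution) is asymptotically
`t^((p-1)δ+1) · a · e^(p(t^(1-δ)-t)·a) · e^(-t^(1-δ)·a)` as `t → 0⁺`. -/
theorem poisson_is_moment_asymptotics
    (a p δ : ℝ) (ha : 0 < a) (hp : 1 ≤ p) (hδ0 : 0 ≤ δ) (hδ1 : δ < 1) :
    Tendsto
      (fun t : ℝ =>
        (∑' k : ℕ,
            if 1 ≤ k then
              (k : ℝ) ^ p * (Real.exp ((t ^ (1 - δ) - t) * a) * t ^ (δ * (k : ℝ))) ^ p *
                (Real.exp (-(t ^ (1 - δ) * a)) * (t ^ (1 - δ) * a) ^ k / (Nat.factorial k : ℝ))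
            else 0)
          / (t ^ ((p - 1) * δ + 1) * a * Real.exp (p * ((t ^ (1 - δ) - t) * a)) *
              Real.exp (-(t ^ (1 - δ) * a))))
      (nhdsWithin 0 (Set.Ioi 0)) (nhds 1) := by
  have hp0 : 0 ≤ p := le_trans zero_le_one hp
  set α : ℝ := (p - 1) * δ + 1 with hαdef
  have hα : 0 < α := by nlinarith
  have hcomp : Tendsto (fun t : ℝ => t ^ α * a) (nhdsWithin 0 (Set.Ioi 0))
      (nhdsWithin 0 (Set.Ioi 0)) := by
    rw [tendsto_nhdsWithin_iff]
    refine ⟨?_, ?_⟩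
    · have h1 : Tendsto (fun t : ℝ => t ^ α) (nhdsWithin 0 (Set.Ioi 0)) (nhds 0) := by
        have h := (Real.continuousAt_rpow_const 0 α (Or.inr hα.le)).continuousWithinAt
          (s := Set.Ioi 0)
        have h2 := h.tendsto
        rwa [Real.zero_rpow hα.ne'] at h2
      simpa using h1.mul_const a
    · filter_upwards [self_mem_nhdsWithin] with t ht
      exact mul_pos (Real.rpow_pos_of_pos ht α) ha
  refine Tendsto.congr' ?_ ((F_tendsto p hp).comp hcomp)
  filter_upwards [self_mem_nhdsWithin] with t ht
  have ht : (0:ℝ) < t := ht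
  set E1 : ℝ := Real.exp (((t ^ (1 - δ) - t) * a) * p) with hE1
  set E2 : ℝ := Real.exp (-(t ^ (1 - δ) * a)) with hE2
  have hnum : ∀ k : ℕ,
      (if 1 ≤ k then
        (k : ℝ) ^ p * (Real.exp ((t ^ (1 - δ) - t) * a) * t ^ (δ * (k : ℝ))) ^ p *
          (E2 * (t ^ (1 - δ) * a) ^ k / (Nat.factorial k : ℝ))
      else 0)
      = (E1 * E2) * (if 1 ≤ k then (k:ℝ)^p * (t ^ α * a)^k / (Nat.factorial k : ℝ) else 0) := by
    intro k
    by_cases hk : 1 ≤ k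
    · simp only [hk, if_true]
      have e1 : (Real.exp ((t ^ (1 - δ) - t) * a) * t ^ (δ * (k : ℝ)))^p
          = E1 * t ^ (δ * (k:ℝ) * p) := by
        rw [Real.mul_rpow (Real.exp_pos _).le (Real.rpow_nonneg ht.le _),
          ← Real.rpow_mul ht.le, Real.rpow_def_of_pos (Real.exp_pos _), Real.log_exp, hE1]
      have e2 : (t ^ (1 - δ) * a) ^ k = t ^ ((1 - δ) * (k:ℝ)) * a ^ k := by
        rw [mul_pow, ← Real.rpow_natCast (t ^ (1 - δ)) k, ← Real.rpow_mul ht.le]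
      have e3 : t ^ (δ * (k:ℝ) * p) * t ^ ((1 - δ) * (k:ℝ)) = (t ^ α) ^ k := by
        rw [← Real.rpow_add ht,
          show δ * (k:ℝ) * p + (1 - δ) * (k:ℝ) = α * (k:ℝ) by rw [hαdef]; ring,
          Real.rpow_mul ht.le, Real.rpow_natCast]
      rw [e1, e2, mul_pow (t ^ α) a k, ← e3]
      ring
    · simp [hk]
  simp only [Function.comp]
  rw [show Real.exp (p * ((t ^ (1 - δ) - t) * a)) = E1 by rw [hE1, mul_comm]]
  rw [tsum_congr hnum, tsum_mul_left,
    show t ^ α * a * E1 * E2 = (E1 * E2) * (t ^ α * a) by ring,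
    mul_div_mul_left _ _ (by positivity)]
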